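/- In the deterministic-tree setup: for every R_c-limit point v0, the set P_{v0} is infinite. -/

import Mathlib

/-- Edge relation of the reversal `R(G)` of a graph `G` with edge set `E` over
the color set `D`: colors are `D ⊕ D` (original colors `Sum.inl d` and fresh
inverse colors `Sum.inr d = d⁻`). -/
def RevEdge {V D : Type*} (E : Set (V × D × V)) : V → (D ⊕ D) → V → Prop
  | v, Sum.inl d, w => (v, d, w) ∈ E
  | v, Sum.inr d, w => (w, d, v) ∈ E

/-- `Marks E v α w`: the word `α` over `D ⊕ D⁻` marks a path from `v` to `w`
in the reversal `R(G)` of the graph with edge set `E`. -/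
def Marks {V D : Type*} (E : Set (V × D × V)) : V → List (D ⊕ D) → V → Prop
  | v, [], w => v = w
  | v, c :: α, w => ∃ u, RevEdge E v c u ∧ Marks E u α w

/-- `IsEdgePath E v l w`: the list of edges `l` forms a directed path from `v`
to `w` in the graph with edge set `E`. -/
def IsEdgePath {V D : Type*} (E : Set (V × D × V)) : V → List (V × D × V) → V → Prop
  | v, [], w => v = w
  | v, e :: l, w => e ∈ E ∧ e.1 = v ∧ IsEdgePath E e.2.2 l w

/-- A graph is a tree if it has a root from which every vertex is reachable by
a unique directed path. -/
def IsTree {V D : Type*} (E : Set (V × D × V)) : Prop :=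
  ∃ r : V, ∀ v : V, ∃! l : List (V × D × V), IsEdgePath E r l v

/-- The cone of a vertex `v`: the set of vertices reachable from `v` by a
directed path (including `v` itself). -/
def Cone {V D : Type*} (E : Set (V × D × V)) (v : V) : Set V :=
  {w | ∃ l : List (V × D × V), IsEdgePath E v l w}

/-- `AutRun Δ q α q'`: the nondeterministic finite automaton with transition
relation `Δ` can go from state `q` to state `q'` reading the word `α`. -/
def AutRun {D Q : Type*} (Δ : Set (Q × (D ⊕ D) × Q)) : Q → List (D ⊕ D) → Q → Prop
  | q, [], q' => q = q'
  | q, c :: α, q' => ∃ q'', (q, c, q'') ∈ Δ ∧ AutRun Δ q'' α q'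

/-- The automaton with transition relation `Δ` can switch from state `q1` to
state `q2` on a path from `v1` to `v2`: some word over `D ⊕ D⁻` marks a path
from `v1` to `v2` in `R(T)` and takes the automaton from `q1` to `q2`. -/
def Switch {V D Q : Type*} (E : Set (V × D × V)) (Δ : Set (Q × (D ⊕ D) × Q))
    (q1 q2 : Q) (v1 v2 : V) : Prop :=
  ∃ α : List (D ⊕ D), Marks E v1 α v2 ∧ AutRun Δ q1 α q2

/-- The vertex-pair type of `(v1, v2)`: the pair of sets of state pairs
`(q1, q2)` such that the automaton can switch from `q1` to `q2` on a path from
`v1` to `v2` (resp. from `v2` to `v1`). -/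
def pairType {V D Q : Type*} (E : Set (V × D × V)) (Δ : Set (Q × (D ⊕ D) × Q))
    (v1 v2 : V) : Set (Q × Q) × Set (Q × Q) :=
  ({q | Switch E Δ q.1 q.2 v1 v2}, {q | Switch E Δ q.1 q.2 v2 v1})

/-- A graph is deterministic if for every vertex and color there is at most
one outgoing edge of that color. -/
def IsDeterministic {V D : Type*} (E : Set (V × D × V)) : Prop :=
  ∀ (v : V) (d : D) (w w' : V), (v, d, w) ∈ E → (v, d, w') ∈ E → w = w'

/-- `v0` is a limit point of the strict (well-)order `R`: it is not the least
element and it is the supremum of the elements strictly below it. -/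
def IsLimitPt {V : Type*} (R : V → V → Prop) (v0 : V) : Prop :=
  (∃ v, R v v0) ∧ ∀ v, R v v0 → ∃ w, R v w ∧ R w v0

/-- A set `B` is `R`-cofinal in `v0`: all its elements are strictly `R`-below
`v0` and `sup_R B = v0`. -/
def CofinalIn {V : Type*} (R : V → V → Prop) (B : Set V) (v0 : V) : Prop :=
  (∀ b ∈ B, R b v0) ∧ ∀ v, R v v0 → ∃ b ∈ B, (b = v ∨ R v b)

/-- `S_{v0}`: the set of vertices whose `T`-cone contains a subset cofinal
in `v0`. -/
def Sset {V D : Type*} (E : Set (V × D × V)) (R : V → V → Prop) (v0 : V) : Set V :=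
  {v | ∃ B ⊆ Cone E v, CofinalIn R B v0}

/-- `P_{v0}`: the set of vertices of `S_{v0}` whose `T`-cone does not
contain `v0`. -/
def Pset {V D : Type*} (E : Set (V × D × V)) (R : V → V → Prop) (v0 : V) : Set V :=
  {v | v ∈ Sset E R v0 ∧ v0 ∉ Cone E v}

section Aux

variable {V D : Type*}

lemma isEdgePath_append {E : Set (V × D × V)} {v w x : V} {l m : List (V × D × V)}
    (h1 : IsEdgePath E v l w) (h2 : IsEdgePath E w m x) : IsEdgePath E v (l ++ m) x := by
  induction l generalizing v with
  | nil =>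
      simp only [IsEdgePath] at h1
      subst h1; simpa using h2
  | cons e l ih =>
      simp only [IsEdgePath] at h1 ⊢
      obtain ⟨he, hev, hrest⟩ := h1
      exact ⟨he, hev, ih hrest⟩

/-- A maximal element of a nonempty list w.r.t. a transitive trichotomous relation. -/
lemma list_exists_ub {R : V → V → Prop}
    (htrans : ∀ a b c, R a b → R b c → R a c)
    (htri : ∀ a b, R a b ∨ a = b ∨ R b a)
    (L : List V) (hne : L ≠ []) : ∃ m ∈ L, ∀ x ∈ L, x = m ∨ R x m := by
  induction L with
  | nil => exact absurd rfl hne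
  | cons a L ih =>
      by_cases hL : L = []
      · subst hL
        exact ⟨a, by simp, by simp⟩
      · obtain ⟨m, hm, hub⟩ := ih hL
        rcases htri a m with h | h | h
        · refine ⟨m, by simp [hm], ?_⟩
          intro x hx
          rcases List.mem_cons.mp hx with rfl | hx
          · exact Or.inr h
          · exact hub x hx
        · subst h
          exact ⟨a, by simp, fun x hx => by
            rcases List.mem_cons.mp hx with rfl | hx
            · exact Or.inl rfl
            · exact hub x hx⟩
        · refine ⟨a, by simp, ?_⟩
          intro x hx
          rcases List.mem_cons.mp hx with rfl | hx
          · exact Or.inl rfl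
          · rcases hub x hx with rfl | hxm
            · exact Or.inr h
            · exact Or.inr (htrans _ _ _ hxm h)

/-- If a cofinal set is covered by a finite list of sets, one of the pieces is
cofinal. -/
lemma cofinal_union {R : V → V → Prop}
    (htrans : ∀ a b c, R a b → R b c → R a c)
    (htri : ∀ a b, R a b ∨ a = b ∨ R b a)
    {v0 : V} {B : Set V}
    (hB : CofinalIn R B v0) (hne : ∃ x, R x v0)
    (Cs : List (Set V)) (hsub : ∀ b ∈ B, ∃ C ∈ Cs, b ∈ C) :
    ∃ C ∈ Cs, CofinalIn R (B ∩ C) v0 := by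
  by_contra hcon
  push_neg at hcon
  obtain ⟨x0, hx0⟩ := hne
  obtain ⟨b0, hb0, -⟩ := hB.2 x0 hx0
  have key : ∀ C : Set V, ∃ u, C ∈ Cs → R u v0 ∧ ∀ b ∈ B ∩ C, b ≠ u ∧ ¬ R u b := by
    intro C
    by_cases hC : C ∈ Cs
    · have h1 := hcon C hC
      unfold CofinalIn at h1
      push_neg at h1
      have hA : ∀ b ∈ B ∩ C, R b v0 := fun b hb => hB.1 b hb.1
      obtain ⟨u, hu1, hu2⟩ := h1 hA
      exact ⟨u, fun _ => ⟨hu1, hu2⟩⟩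
    · exact ⟨b0, fun h => absurd h hC⟩
  choose u hu using key
  have hCs : Cs ≠ [] := by
    obtain ⟨C, hC, -⟩ := hsub b0 hb0
    intro h; rw [h] at hC; exact List.not_mem_nil hC
  have hLne : Cs.map u ≠ [] := by
    simpa using hCs
  obtain ⟨m, hmL, hub⟩ := list_exists_ub htrans htri (Cs.map u) hLne
  obtain ⟨Cm, hCm, hCmu⟩ := List.mem_map.mp hmL
  have hmv0 : R m v0 := hCmu ▸ ((hu Cm hCm).1)
  obtain ⟨b, hbB, hbm⟩ := hB.2 m hmv0
  obtain ⟨C, hC, hbC⟩ := hsub b hbB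
  have huC : u C ∈ Cs.map u := List.mem_map.mpr ⟨C, hC, rfl⟩
  have hspec := (hu C hC).2 b ⟨hbB, hbC⟩
  rcases hub (u C) huC with h1 | h1 <;> rcases hbm with rfl | h2
  · exact hspec.1 h1.symm
  · exact hspec.2 (h1 ▸ h2)
  · exact hspec.2 h1
  · exact hspec.2 (htrans _ _ _ h1 h2)

/-- Removing one point from a cofinal set at a limit point keeps it cofinal. -/
lemma cofinal_diff {R : V → V → Prop}
    (htrans : ∀ a b c, R a b → R b c → R a c)
    (hirr : ∀ a, ¬ R a a)
    {v0 : V} {B : Set V} {v : V}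
    (hB : CofinalIn R B v0) (hlim2 : ∀ x, R x v0 → ∃ w, R x w ∧ R w v0) :
    CofinalIn R (B \ {v}) v0 := by
  constructor
  · exact fun b hb => hB.1 b hb.1
  · intro x hx
    obtain ⟨w, hxw, hw0⟩ := hlim2 x hx
    obtain ⟨b, hb, hwb⟩ := hB.2 w hw0
    by_cases hbv : b = v
    · subst hbv
      obtain ⟨w2, hw2a, hw2b⟩ := hlim2 b (hB.1 b hb)
      obtain ⟨b2, hb2, hw2b2⟩ := hB.2 w2 hw2b
      have hbb2 : R b b2 := by
        rcases hw2b2 with rfl | h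
        · exact hw2a
        · exact htrans _ _ _ hw2a h
      have hxb : R x b := by
        rcases hwb with rfl | h
        · exact hxw
        · exact htrans _ _ _ hxw h
      refine ⟨b2, ⟨hb2, ?_⟩, Or.inr (htrans _ _ _ hxb hbb2)⟩
      intro hmem
      have : b2 = b := hmem
      exact hirr b (this ▸ hbb2)
    · refine ⟨b, ⟨hb, hbv⟩, Or.inr ?_⟩
      rcases hwb with rfl | h
      · exact hxw
      · exact htrans _ _ _ hxw h

/-- Key step: any vertex of `S_{v0}` has a child in `S_{v0}`. -/
lemma step_lemma [Fintype D] {E : Set (V × D × V)} (hdet : IsDeterministic E)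
    {R : V → V → Prop}
    (htrans : ∀ a b c, R a b → R b c → R a c)
    (htri : ∀ a b, R a b ∨ a = b ∨ R b a)
    (hirr : ∀ a, ¬ R a a)
    {v0 : V} (hlim : IsLimitPt R v0) {v : V} (hv : v ∈ Sset E R v0) :
    ∃ w, (∃ d, (v, d, w) ∈ E) ∧ w ∈ Sset E R v0 := by
  obtain ⟨B, hBsub, hBcof⟩ := hv
  have hB' : CofinalIn R (B \ {v}) v0 := cofinal_diff htrans hirr hBcof hlim.2
  set Cs : List (Set V) :=
    (Finset.univ : Finset D).toList.map
      (fun d => {x | ∃ w, (v, d, w) ∈ E ∧ x ∈ Cone E w}) with hCs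
  have hsub : ∀ b ∈ B \ {v}, ∃ C ∈ Cs, b ∈ C := by
    intro b hb
    have hbC : b ∈ Cone E v := hBsub hb.1
    obtain ⟨l, hl⟩ := hbC
    cases l with
    | nil =>
        simp only [IsEdgePath] at hl
        exact absurd hl.symm hb.2
    | cons e l' =>
        simp only [IsEdgePath] at hl
        obtain ⟨he, he1, hl'⟩ := hl
        refine ⟨_, List.mem_map.mpr
          ⟨e.2.1, Finset.mem_toList.mpr (Finset.mem_univ _), rfl⟩, ?_⟩
        refine ⟨e.2.2, ?_, ⟨l', hl'⟩⟩
        have : (e.1, e.2.1, e.2.2) = e := rfl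
        rw [← he1, this]
        exact he
  obtain ⟨C, hC, hCcof⟩ := cofinal_union htrans htri hB' hlim.1 Cs hsub
  obtain ⟨d, -, hCd⟩ := List.mem_map.mp hC
  obtain ⟨x0, hx0⟩ := hlim.1
  obtain ⟨b1, hb1, -⟩ := hCcof.2 x0 hx0
  have hb1C : b1 ∈ C := hb1.2
  rw [← hCd] at hb1C
  obtain ⟨w, hwE, -⟩ := hb1C
  refine ⟨w, ⟨d, hwE⟩, (B \ {v}) ∩ C, ?_, hCcof⟩
  intro x hx
  have hxC : x ∈ C := hx.2
  rw [← hCd] at hxC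
  obtain ⟨w', hw'E, hxw'⟩ := hxC
  rwa [hdet v d w' w hw'E hwE] at hxw'

end Aux

/-- Deterministic-tree setup: `T` is a deterministic tree over a finite color
set `D`, `B` is a nondeterministic finite automaton over `D ⊕ D⁻` with
distinguished states `qI, qc`, and the relation
`R_c v1 v2 := B can switch from qI to qc on a path from v1 to v2 in R(T)`
is a strict well-order on the vertices. Then for every `R_c`-limit point `v0`
the set `P_{v0}` is infinite. -/
theorem Pset_infinite {V D Q : Type*} [Fintype D] [Fintype Q]
    (E : Set (V × D × V)) (hTree : IsTree E) (hdet : IsDeterministic E)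
    (Δ : Set (Q × (D ⊕ D) × Q)) (qI qc : Q)
    (hwo : IsWellOrder V (Switch E Δ qI qc))
    (v0 : V) (hlim : IsLimitPt (Switch E Δ qI qc) v0) :
    (Pset E (Switch E Δ qI qc) v0).Infinite := by
  classical
  set R : V → V → Prop := Switch E Δ qI qc with hRdef
  have htrans : ∀ a b c, R a b → R b c → R a c := by haveI := hwo; exact fun a b c h1 h2 => trans_of R h1 h2
  have htri : ∀ a b, R a b ∨ a = b ∨ R b a := by haveI := hwo; exact fun a b => trichotomous_of R a b
  have hirr : ∀ a, ¬ R a a := fun a h => (hwo.wf.isIrrefl).irrefl a h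
  obtain ⟨r, hr⟩ := hTree
  -- the root is in S
  have hroot : r ∈ Sset E R v0 := by
    refine ⟨{x | R x v0}, fun b _ => (hr b).exists, fun b hb => hb, ?_⟩
    intro x hx
    exact ⟨x, hx, Or.inl rfl⟩
  -- step
  have hstep : ∀ v ∈ Sset E R v0, ∃ w, (∃ d, (v, d, w) ∈ E) ∧ w ∈ Sset E R v0 :=
    fun v hv => step_lemma hdet htrans htri hirr hlim hv
  set F : V → V := fun v =>
    if h : v ∈ Sset E R v0 then (hstep v h).choose else v with hFdef
  have hF : ∀ v (h : v ∈ Sset E R v0),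
      (∃ d, (v, d, F v) ∈ E) ∧ F v ∈ Sset E R v0 := by
    intro v h
    simp only [hFdef, dif_pos h]
    exact (hstep v h).choose_spec
  set f : ℕ → V := fun n => F^[n] r with hfdef
  have hfsucc : ∀ n, f (n + 1) = F (f n) := by
    intro n
    simp only [hfdef, Function.iterate_succ_apply']
  have hfS : ∀ n, f n ∈ Sset E R v0 := by
    intro n
    induction n with
    | zero => exact hroot
    | succ n ih => rw [hfsucc]; exact (hF _ ih).2
  have hedge : ∀ n, ∃ d, (f n, d, f (n + 1)) ∈ E := by
    intro n
    rw [hfsucc]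
    exact (hF _ (hfS n)).1
  -- depth function
  set dep : V → ℕ := fun v => (hr v).exists.choose.length with hdepdef
  have hdep : ∀ v w d, (v, d, w) ∈ E → dep w = dep v + 1 := by
    intro v w d hvw
    have hlv := (hr v).exists.choose_spec
    have hpath : IsEdgePath E r ((hr v).exists.choose ++ [(v, d, w)]) w := by
      refine isEdgePath_append hlv ?_
      simp only [IsEdgePath]
      exact ⟨hvw, by simp, by simp [IsEdgePath]⟩
    have := (hr w).unique (hr w).exists.choose_spec hpath
    simp only [hdepdef]
    rw [this]
    simp
  have hdepf : ∀ n, dep (f n) = n + dep r := by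
    intro n
    induction n with
    | zero => simp [hfdef]
    | succ n ih =>
        obtain ⟨d, hd⟩ := hedge n
        rw [hdep _ _ _ hd, ih]
        omega
  have hinj : Function.Injective f := by
    intro m n hmn
    have : dep (f m) = dep (f n) := by rw [hmn]
    rw [hdepf, hdepf] at this
    omega
  have hSinf : (Sset E R v0).Infinite :=
    Set.infinite_of_injective_forall_mem hinj hfS
  -- ancestors of v0 form a finite set
  set l0 : List (V × D × V) := (hr v0).exists.choose with hl0def
  set A : Set V := insert v0 (Prod.fst '' {e | e ∈ l0}) with hAdef
  have hAfin : A.Finite := (l0.finite_toSet.image _).insert v0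
  have hanc : {v | v0 ∈ Cone E v} ⊆ A := by
    intro v hv
    obtain ⟨m, hm⟩ := hv
    have hlv := (hr v).exists.choose_spec
    have hpath : IsEdgePath E r ((hr v).exists.choose ++ m) v0 :=
      isEdgePath_append hlv hm
    have heq : (hr v).exists.choose ++ m = l0 :=
      (hr v0).unique hpath (hr v0).exists.choose_spec
    cases m with
    | nil =>
        simp only [IsEdgePath] at hm
        rw [hm]
        exact Set.mem_insert _ _
    | cons e m' =>
        simp only [IsEdgePath] at hm
        have hme : e ∈ l0 := by
          rw [← heq]
          exact List.mem_append.mpr (Or.inr List.mem_cons_self)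
        refine Set.mem_insert_iff.mpr (Or.inr ⟨e, hme, hm.2.1⟩)
  have hsubP : Sset E R v0 \ A ⊆ Pset E R v0 := by
    intro v hv
    refine ⟨hv.1, fun hc => hv.2 (hanc hc)⟩
  exact (hSinf.diff hAfin).mono hsubP
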